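/- arXiv:2510.13445 — 2 statements merged into one kernel-verified Lean document; each statement's English description precedes it below -/
import Mathlib

section
/- Let (Ω, P) be a probability space, h : Ω → ℝ with |h| ≤ 1, y : Ω → {−1,1}, ρ : Ω → [0,1] with P_noise = E[ρ] < 1/2 and Var(ρ) = E[(ρ − P_noise)²]. Then |E[y h (1 − 2ρ)]/(1 − 2P_noise) − E[y h]| ≤ 2√(Var(ρ))/(1 − 2P_noise). -/
open MeasureTheory

lemma abs_integral_le_sqrt_sq {Ω : Type*} [MeasurableSpace Ω]
    (P : Measure Ω) [IsProbabilityMeasure P] (X : Ω → ℝ) (hX : Measurable X)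
    (C : ℝ) (hC : ∀ ω, |X ω| ≤ C) :
    ∫ ω, |X ω| ∂P ≤ Real.sqrt (∫ ω, (X ω)^2 ∂P) := by
  have hmem : MemLp X (ENNReal.ofReal 2) P := by
    refine MemLp.of_bound hX.aestronglyMeasurable C (Filter.Eventually.of_forall ?_)
    simpa [Real.norm_eq_abs] using hC
  have hone : MemLp (fun _ : Ω => (1:ℝ)) (ENNReal.ofReal 2) P := memLp_const 1
  have hpq : Real.HolderConjugate 2 2 := by constructor <;> norm_num
  have H := integral_mul_norm_le_Lp_mul_Lq (μ := P) (f := X) (g := fun _ => (1:ℝ))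
    hpq hmem hone
  have e1 : ∀ ω, ‖X ω‖ * ‖(1:ℝ)‖ = |X ω| := by intro ω; simp [Real.norm_eq_abs]
  have e2 : ∀ ω, ‖X ω‖ ^ (2:ℝ) = (X ω)^2 := by
    intro ω
    rw [show ((2:ℝ)) = ((2:ℕ):ℝ) by norm_num, Real.rpow_natCast]
    simp [Real.norm_eq_abs, sq_abs]
  simp only [e1, e2] at H
  calc ∫ ω, |X ω| ∂P ≤ (∫ ω, (X ω)^2 ∂P) ^ (1/(2:ℝ)) * (∫ ω, ‖(1:ℝ)‖ ^ (2:ℝ) ∂P) ^ (1/(2:ℝ)) := H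
    _ = Real.sqrt (∫ ω, (X ω)^2 ∂P) := by
        simp [Real.sqrt_eq_rpow, one_div]

lemma integrable_of_bdd {Ω : Type*} [MeasurableSpace Ω]
    (P : Measure Ω) [IsProbabilityMeasure P] (X : Ω → ℝ) (hX : Measurable X)
    (C : ℝ) (hC : ∀ ω, |X ω| ≤ C) : Integrable X P := by
  refine Integrable.mono' (integrable_const C) hX.aestronglyMeasurable
    (Filter.Eventually.of_forall ?_)
  simpa [Real.norm_eq_abs] using hC

theorem debiased_noisy_expectation_bound {Ω : Type*} [MeasurableSpace Ω]
    (P : Measure Ω) [IsProbabilityMeasure P] (h y ρ : Ω → ℝ)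
    (hh : Measurable h) (hhb : ∀ ω, |h ω| ≤ 1)
    (hym : Measurable y) (hy : ∀ ω, y ω = 1 ∨ y ω = -1)
    (hρm : Measurable ρ) (hρ01 : ∀ ω, ρ ω ∈ Set.Icc (0:ℝ) 1)
    (Pnoise : ℝ) (hP : Pnoise = ∫ ω, ρ ω ∂P) (hPlt : Pnoise < 1/2) :
    |(∫ ω, y ω * h ω * (1 - 2 * ρ ω) ∂P) / (1 - 2 * Pnoise)
        - ∫ ω, y ω * h ω ∂P|
      ≤ 2 * Real.sqrt (∫ ω, (ρ ω - Pnoise)^2 ∂P) / (1 - 2 * Pnoise) := by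
  have ha : 0 < 1 - 2 * Pnoise := by linarith
  set g : Ω → ℝ := fun ω => y ω * h ω with hg
  have hgm : Measurable g := hym.mul hh
  have hgb : ∀ ω, |g ω| ≤ 1 := by
    intro ω
    have : |y ω| = 1 := by rcases hy ω with h1 | h1 <;> simp [h1]
    simp only [hg, abs_mul, this, one_mul]
    exact hhb ω
  have hρb : ∀ ω, |ρ ω| ≤ 1 := fun ω => abs_le.mpr ⟨by linarith [(hρ01 ω).1], (hρ01 ω).2⟩
  -- integrability
  have int_g : Integrable g P := integrable_of_bdd P g hgm 1 hgb
  have int1 : Integrable (fun ω => g ω * (1 - 2 * ρ ω)) P := by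
    refine integrable_of_bdd P _ (hgm.mul ((measurable_const.sub (hρm.const_mul 2)))) 3 ?_
    intro ω
    have := hgb ω; have := hρb ω
    calc |g ω * (1 - 2 * ρ ω)| = |g ω| * |1 - 2 * ρ ω| := abs_mul _ _
      _ ≤ 1 * 3 := by
          apply mul_le_mul (hgb ω) ?_ (abs_nonneg _) one_pos.le
          have h2 : |2 * ρ ω| ≤ 2 := by rw [abs_mul]; simpa using mul_le_mul_of_nonneg_left (hρb ω) (by norm_num : (0:ℝ) ≤ 2)
          calc |1 - 2 * ρ ω| ≤ |(1:ℝ)| + |2 * ρ ω| := abs_sub _ _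
            _ ≤ 3 := by simp at h2 ⊢; linarith
      _ = 3 := by norm_num
  have int2 : Integrable (fun ω => g ω * (ρ ω - Pnoise)) P := by
    refine integrable_of_bdd P _ (hgm.mul (hρm.sub measurable_const)) (1 + |Pnoise|) ?_
    intro ω
    calc |g ω * (ρ ω - Pnoise)| = |g ω| * |ρ ω - Pnoise| := abs_mul _ _
      _ ≤ 1 * (1 + |Pnoise|) := by
          apply mul_le_mul (hgb ω) ?_ (abs_nonneg _) (by positivity)
          calc |ρ ω - Pnoise| ≤ |ρ ω| + |Pnoise| := abs_sub _ _
            _ ≤ 1 + |Pnoise| := by linarith [hρb ω]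
      _ = 1 + |Pnoise| := one_mul _
  -- key algebraic identity
  have key : ∫ ω, g ω * (1 - 2 * ρ ω) ∂P - (1 - 2 * Pnoise) * ∫ ω, g ω ∂P
      = -2 * ∫ ω, g ω * (ρ ω - Pnoise) ∂P := by
    rw [← integral_const_mul, ← integral_const_mul, ← integral_sub int1 (int_g.const_mul _)]
    congr 1
    funext ω
    ring
  have hnum : (∫ ω, g ω * (1 - 2 * ρ ω) ∂P) / (1 - 2 * Pnoise) - ∫ ω, g ω ∂P
      = (-2 * ∫ ω, g ω * (ρ ω - Pnoise) ∂P) / (1 - 2 * Pnoise) := by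
    rw [← key]; field_simp
  rw [show (fun ω => y ω * h ω * (1 - 2 * ρ ω)) = (fun ω => g ω * (1 - 2 * ρ ω)) from rfl] at *
  rw [hnum, abs_div, abs_of_pos ha]
  gcongr
  -- |−2 ∫ ...| ≤ 2 √Var
  rw [abs_mul, abs_neg, abs_two]
  apply mul_le_mul_of_nonneg_left ?_ (by norm_num : (0:ℝ) ≤ 2)
  calc |∫ ω, g ω * (ρ ω - Pnoise) ∂P| ≤ ∫ ω, |g ω| * |ρ ω - Pnoise| ∂P :=
        by simpa [Real.norm_eq_abs] using norm_integral_le_integral_norm (μ := P) (fun ω => g ω * (ρ ω - Pnoise))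
    _ ≤ ∫ ω, |ρ ω - Pnoise| ∂P := by
        refine integral_mono (by simpa [abs_mul] using int2.abs)
          ((integrable_of_bdd P _ (hρm.sub measurable_const) (1 + |Pnoise|) (fun ω => by
            calc |ρ ω - Pnoise| ≤ |ρ ω| + |Pnoise| := abs_sub _ _
              _ ≤ 1 + |Pnoise| := by linarith [hρb ω])).abs) (fun ω => ?_)
        simpa using mul_le_mul_of_nonneg_right (hgb ω) (abs_nonneg (ρ ω - Pnoise))
    _ ≤ Real.sqrt (∫ ω, (ρ ω - Pnoise)^2 ∂P) :=
        abs_integral_le_sqrt_sq P _ (hρm.sub measurable_const) (1 + |Pnoise|) (fun ω => by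
          calc |ρ ω - Pnoise| ≤ |ρ ω| + |Pnoise| := abs_sub _ _
            _ ≤ 1 + |Pnoise| := by linarith [hρb ω])
end

section
/- Let Ω be a finite set with probability measure P, y : Ω → {−1, 1}, ĥ : Ω → ℝᵀ with ‖ĥ(ω)‖∞ ≤ 1, μ ∈ ℝᵀ, τ ∈ ℝᵀ, λ > 0. Define F(μ) = 1/2 − ⟨τ, μ⟩ + λ‖μ‖₁, e = E[y ĥ], and suppose ‖e − τ‖∞ ≤ δ for some δ ≥ 0. Suppose |⟨ĥ(ω), μ⟩| ≤ 1/2 for all ω. Then R(h_μ) := E[1 − [y⟨ĥ, μ⟩ + 1/2]₀¹] ≤ F(μ) + (δ − λ)‖μ‖₁. -/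
theorem generalization_bound_finite {Ω : Type*} [Fintype Ω]
    (p : Ω → ℝ) (hp : ∀ ω, 0 ≤ p ω) (hsum : ∑ ω, p ω = 1)
    {T : ℕ} (y : Ω → ℝ) (hy : ∀ ω, y ω = 1 ∨ y ω = -1)
    (hb : Ω → Fin T → ℝ) (hbnd : ∀ ω i, |hb ω i| ≤ 1)
    (μ τ : Fin T → ℝ) (lam δ : ℝ) (hlam : 0 < lam) (hδ : 0 ≤ δ)
    (he : ∀ i, |(∑ ω, p ω * (y ω * hb ω i)) - τ i| ≤ δ)
    (hmargin : ∀ ω, |∑ i, hb ω i * μ i| ≤ 1/2) :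
    ∑ ω, p ω * (1 - min (max (y ω * (∑ i, hb ω i * μ i) + 1/2) 0) 1)
      ≤ (1/2 - (∑ i, τ i * μ i) + lam * ∑ i, |μ i|)
          + (δ - lam) * ∑ i, |μ i| := by
  have hclip : ∀ ω, min (max (y ω * (∑ i, hb ω i * μ i) + 1/2) 0) 1
      = y ω * (∑ i, hb ω i * μ i) + 1/2 := by
    intro ω
    have hys : |y ω * (∑ i, hb ω i * μ i)| ≤ 1/2 := by
      rw [abs_mul]
      rcases hy ω with h | h <;> simpa [h] using hmargin ω
    have h1 := abs_le.mp hys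
    rw [max_eq_left (by linarith [h1.1]), min_eq_left (by linarith [h1.2])]
  have hL : ∑ ω, p ω * (1 - min (max (y ω * (∑ i, hb ω i * μ i) + 1/2) 0) 1)
      = 1/2 - ∑ i, (∑ ω, p ω * (y ω * hb ω i)) * μ i := by
    have : ∀ ω, p ω * (1 - min (max (y ω * (∑ i, hb ω i * μ i) + 1/2) 0) 1)
        = p ω * (1/2) - ∑ i, p ω * (y ω * hb ω i) * μ i := by
      intro ω
      rw [hclip ω]
      have : ∑ i, p ω * (y ω * hb ω i) * μ i = p ω * y ω * ∑ i, hb ω i * μ i := by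
        rw [Finset.mul_sum]; apply Finset.sum_congr rfl; intro i _; ring
      rw [this]; ring
    rw [Finset.sum_congr rfl fun ω _ => this ω, Finset.sum_sub_distrib,
      ← Finset.sum_mul, hsum, Finset.sum_comm]
    congr 1
    · ring
    · apply Finset.sum_congr rfl
      intro i _
      rw [Finset.sum_mul]
  rw [hL]
  have hkey : ∑ i, τ i * μ i - ∑ i, (∑ ω, p ω * (y ω * hb ω i)) * μ i
      ≤ δ * ∑ i, |μ i| := by
    rw [← Finset.sum_sub_distrib, Finset.mul_sum]
    apply Finset.sum_le_sum
    intro i _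
    have : τ i * μ i - (∑ ω, p ω * (y ω * hb ω i)) * μ i
        = (τ i - ∑ ω, p ω * (y ω * hb ω i)) * μ i := by ring
    rw [this]
    calc (τ i - ∑ ω, p ω * (y ω * hb ω i)) * μ i
        ≤ |(τ i - ∑ ω, p ω * (y ω * hb ω i)) * μ i| := le_abs_self _
      _ = |(∑ ω, p ω * (y ω * hb ω i)) - τ i| * |μ i| := by
          rw [abs_mul, abs_sub_comm]
      _ ≤ δ * |μ i| := by
          exact mul_le_mul_of_nonneg_right (he i) (abs_nonneg _)
  linarith
end
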